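/- If β ≥ 1 and n > 2, then the upper envelope of f over X ∩ W_{ij}, i.e. the convex hull of the hypograph {(x,z) ∈ (X ∩ W_{ij}) × ℝ : z ≤ f(x)}, equals H = {(x,z) ∈ ℝ₊ⁿ × ℝ : z − z₀ ≤ (γ ∏_{k=1}^n x_k^{a_k})^{1/β}, z ≤ u, p xᵢ ≤ x_j ≤ q xᵢ, and ∏_{k=1}^n x_k^{a_k} ≥ ℓ}. -/

import Mathlib

open Real Finset

private lemma prod_scaled {n : ℕ} {a : Fin n → ℝ} (ha : ∀ k, 0 ≤ a k)
    {x : Fin n → ℝ} (hx : ∀ k, 0 ≤ x k) {s : ℝ} (hs : 0 ≤ s) :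
    ∏ k, (s * x k) ^ a k = s ^ (∑ k, a k) * ∏ k, x k ^ a k := by
  rw [Real.rpow_sum_of_nonneg hs (fun k _ => ha k), ← Finset.prod_mul_distrib]
  exact Finset.prod_congr rfl fun k _ => Real.mul_rpow hs (hx k)

private lemma geom_comb {n : ℕ} {a : Fin n → ℝ} (ha : ∀ k, 0 ≤ a k)
    {x y : Fin n → ℝ} (hx : ∀ k, 0 ≤ x k) (hy : ∀ k, 0 ≤ y k)
    {μ ν : ℝ} (hμ : 0 ≤ μ) (hν : 0 ≤ ν) (hμν : μ + ν = 1) :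
    (∏ k, x k ^ a k) ^ μ * (∏ k, y k ^ a k) ^ ν ≤ ∏ k, (μ * x k + ν * y k) ^ a k := by
  have key : ∀ k, (x k ^ a k) ^ μ * (y k ^ a k) ^ ν ≤ (μ * x k + ν * y k) ^ a k := by
    intro k
    have h1 : x k ^ μ * y k ^ ν ≤ μ * x k + ν * y k :=
      Real.geom_mean_le_arith_mean2_weighted hμ hν (hx k) (hy k) hμν
    have h2 : ((x k ^ μ * y k ^ ν) : ℝ) ^ a k ≤ (μ * x k + ν * y k) ^ a k :=
      Real.rpow_le_rpow (mul_nonneg (Real.rpow_nonneg (hx k) _) (Real.rpow_nonneg (hy k) _))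
        h1 (ha k)
    calc (x k ^ a k) ^ μ * (y k ^ a k) ^ ν
        = (x k ^ μ) ^ a k * (y k ^ ν) ^ a k := by
          rw [← Real.rpow_mul (hx k), ← Real.rpow_mul (hy k), mul_comm (a k) μ,
            mul_comm (a k) ν, Real.rpow_mul (hx k), Real.rpow_mul (hy k)]
      _ = (x k ^ μ * y k ^ ν) ^ a k :=
          (Real.mul_rpow (Real.rpow_nonneg (hx k) _) (Real.rpow_nonneg (hy k) _)).symm
      _ ≤ _ := h2
  calc (∏ k, x k ^ a k) ^ μ * (∏ k, y k ^ a k) ^ ν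
      = ∏ k, (x k ^ a k) ^ μ * (y k ^ a k) ^ ν := by
        rw [Finset.prod_mul_distrib,
          Real.finset_prod_rpow _ _ (fun k _ => Real.rpow_nonneg (hx k) _) μ,
          Real.finset_prod_rpow _ _ (fun k _ => Real.rpow_nonneg (hy k) _) ν]
    _ ≤ _ := Finset.prod_le_prod (fun k _ => mul_nonneg (Real.rpow_nonneg (Real.rpow_nonneg (hx k) _) _) (Real.rpow_nonneg (Real.rpow_nonneg (hy k) _) _)) (fun k _ => key k)

private lemma geom_mono {n : ℕ} {a : Fin n → ℝ} (ha : ∀ k, 0 ≤ a k)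
    {x y : Fin n → ℝ} (hx : ∀ k, 0 ≤ x k) (hxy : ∀ k, x k ≤ y k) :
    ∏ k, x k ^ a k ≤ ∏ k, y k ^ a k :=
  Finset.prod_le_prod (fun k _ => Real.rpow_nonneg (hx k) _)
    (fun k _ => Real.rpow_le_rpow (hx k) (hxy k) (ha k))

private lemma geom_concave {n : ℕ} {a : Fin n → ℝ} (ha : ∀ k, 0 ≤ a k) {β : ℝ}
    (hβ : β = ∑ k, a k) (hβpos : 0 < β)
    {x y : Fin n → ℝ} (hx : ∀ k, 0 ≤ x k) (hy : ∀ k, 0 ≤ y k)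
    {μ ν : ℝ} (hμ : 0 ≤ μ) (hν : 0 ≤ ν) (hμν : μ + ν = 1) :
    μ * (∏ k, x k ^ a k) ^ (1/β) + ν * (∏ k, y k ^ a k) ^ (1/β)
      ≤ (∏ k, (μ * x k + ν * y k) ^ a k) ^ (1/β) := by
  set fx := ∏ k, x k ^ a k with hfx
  set fy := ∏ k, y k ^ a k with hfy
  have hfx0 : 0 ≤ fx := Finset.prod_nonneg fun k _ => Real.rpow_nonneg (hx k) _
  have hfy0 : 0 ≤ fy := Finset.prod_nonneg fun k _ => Real.rpow_nonneg (hy k) _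
  set Fx := fx ^ (1/β) with hFx
  set Fy := fy ^ (1/β) with hFy
  have hFx0 : 0 ≤ Fx := Real.rpow_nonneg hfx0 _
  have hFy0 : 0 ≤ Fy := Real.rpow_nonneg hfy0 _
  have hβne : β ≠ 0 := ne_of_gt hβpos
  have hcomb0 : 0 ≤ ∏ k, (μ * x k + ν * y k) ^ a k :=
    Finset.prod_nonneg fun k _ => Real.rpow_nonneg (add_nonneg (mul_nonneg hμ (hx k)) (mul_nonneg hν (hy k))) _
  -- key: (μ*Fx + ν*Fy)^β ≤ f(comb)
  have key : (μ * Fx + ν * Fy) ^ β ≤ ∏ k, (μ * x k + ν * y k) ^ a k := by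
    rcases eq_or_lt_of_le (add_nonneg (mul_nonneg hμ hFx0) (mul_nonneg hν hFy0) :
        (0:ℝ) ≤ μ * Fx + ν * Fy) with hT | hT
    · rw [← hT, Real.zero_rpow hβne]; exact hcomb0
    rcases eq_or_lt_of_le hfx0 with hfx' | hfx'
    · -- fx = 0, Fx = 0
      have hFxz : Fx = 0 := by rw [hFx, ← hfx', Real.zero_rpow (one_div_ne_zero hβne)]
      have hT' : μ * Fx + ν * Fy = ν * Fy := by rw [hFxz]; ring
      rw [hT']
      have hmono : ∏ k, (ν * y k) ^ a k ≤ ∏ k, (μ * x k + ν * y k) ^ a k :=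
        geom_mono ha (fun k => mul_nonneg hν (hy k))
          (fun k => le_add_of_nonneg_left (mul_nonneg hμ (hx k)))
      calc (ν * Fy) ^ β = ν ^ β * Fy ^ β := Real.mul_rpow hν hFy0
        _ = ν ^ β * fy := by
            rw [hFy, ← Real.rpow_mul hfy0, one_div, inv_mul_cancel₀ hβne, Real.rpow_one]
        _ = ∏ k, (ν * y k) ^ a k := by rw [prod_scaled ha hy hν, ← hβ]
        _ ≤ _ := hmono
    rcases eq_or_lt_of_le hfy0 with hfy' | hfy'
    · have hFyz : Fy = 0 := by rw [hFy, ← hfy', Real.zero_rpow (one_div_ne_zero hβne)]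
      have hT' : μ * Fx + ν * Fy = μ * Fx := by rw [hFyz]; ring
      rw [hT']
      have hmono : ∏ k, (μ * x k) ^ a k ≤ ∏ k, (μ * x k + ν * y k) ^ a k :=
        geom_mono ha (fun k => mul_nonneg hμ (hx k))
          (fun k => le_add_of_nonneg_right (mul_nonneg hν (hy k)))
      calc (μ * Fx) ^ β = μ ^ β * Fx ^ β := Real.mul_rpow hμ hFx0
        _ = μ ^ β * fx := by
            rw [hFx, ← Real.rpow_mul hfx0, one_div, inv_mul_cancel₀ hβne, Real.rpow_one]
        _ = ∏ k, (μ * x k) ^ a k := by rw [prod_scaled ha hx hμ, ← hβ]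
        _ ≤ _ := hmono
    -- main case: fx, fy > 0
    have hFxp : 0 < Fx := Real.rpow_pos_of_pos hfx' _
    have hFyp : 0 < Fy := Real.rpow_pos_of_pos hfy' _
    set T := μ * Fx + ν * Fy with hTdef
    set l1 := μ * Fx / T with hl1
    set l2 := ν * Fy / T with hl2
    have hl1n : 0 ≤ l1 := by positivity
    have hl2n : 0 ≤ l2 := by positivity
    have hl12 : l1 + l2 = 1 := by rw [hl1, hl2, ← add_div]; exact div_self hT.ne'
    have hx' : ∀ k, 0 ≤ (1/Fx) * x k := fun k => mul_nonneg (div_nonneg zero_le_one hFx0) (hx k)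
    have hy' : ∀ k, 0 ≤ (1/Fy) * y k := fun k => mul_nonneg (div_nonneg zero_le_one hFy0) (hy k)
    have hFxβ : Fx ^ β = fx := by
      rw [hFx, ← Real.rpow_mul hfx0, one_div, inv_mul_cancel₀ hβne, Real.rpow_one]
    have hFyβ : Fy ^ β = fy := by
      rw [hFy, ← Real.rpow_mul hfy0, one_div, inv_mul_cancel₀ hβne, Real.rpow_one]
    have hfx'' : ∏ k, ((1/Fx) * x k) ^ a k = 1 := by
      rw [prod_scaled ha hx (div_nonneg zero_le_one hFx0), ← hβ,
        Real.div_rpow zero_le_one hFx0, Real.one_rpow, hFxβ, ← hfx]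
      field_simp
    have hfy'' : ∏ k, ((1/Fy) * y k) ^ a k = 1 := by
      rw [prod_scaled ha hy (div_nonneg zero_le_one hFy0), ← hβ,
        Real.div_rpow zero_le_one hFy0, Real.one_rpow, hFyβ, ← hfy]
      field_simp
    have hcc := geom_comb ha hx' hy' hl1n hl2n hl12
    rw [hfx'', hfy'', Real.one_rpow, Real.one_rpow, one_mul] at hcc
    have hid : ∀ k, μ * x k + ν * y k
        = T * (l1 * ((1/Fx) * x k) + l2 * ((1/Fy) * y k)) := by
      intro k
      rw [hl1, hl2]
      field_simp
    have hnn : ∀ k, 0 ≤ l1 * ((1/Fx) * x k) + l2 * ((1/Fy) * y k) :=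
      fun k => add_nonneg (mul_nonneg hl1n (hx' k)) (mul_nonneg hl2n (hy' k))
    calc T ^ β = T ^ β * 1 := (mul_one _).symm
      _ ≤ T ^ β * ∏ k, (l1 * ((1/Fx) * x k) + l2 * ((1/Fy) * y k)) ^ a k :=
          mul_le_mul_of_nonneg_left hcc (Real.rpow_nonneg hT.le _)
      _ = ∏ k, (T * (l1 * ((1/Fx) * x k) + l2 * ((1/Fy) * y k))) ^ a k := by
          rw [prod_scaled ha hnn hT.le, ← hβ]
      _ = ∏ k, (μ * x k + ν * y k) ^ a k :=
          Finset.prod_congr rfl fun k _ => by rw [← hid k]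
  have hTnn : (0:ℝ) ≤ μ * Fx + ν * Fy := add_nonneg (mul_nonneg hμ hFx0) (mul_nonneg hν hFy0)
  calc μ * Fx + ν * Fy = ((μ * Fx + ν * Fy) ^ β) ^ (1/β) := by
        rw [← Real.rpow_mul hTnn, mul_one_div, div_self hβne, Real.rpow_one]
    _ ≤ _ := Real.rpow_le_rpow (Real.rpow_nonneg hTnn _) key (by positivity)
set_option maxHeartbeats 1000000 in
theorem upper_envelope_eq_of_one_le_beta (n : ℕ) (hn : 2 < n) (a : Fin n → ℝ)
    (ha : ∀ k, 0 < a k) (ℓ u : ℝ) (hℓ : 0 < ℓ) (hℓu : ℓ < u)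
    (i j : Fin n) (hij : i ≠ j) (p q : ℝ) (hp : 0 < p) (hpq : p < q)
    (β z₀ γ : ℝ) (hβ : β = ∑ k, a k) (hβ1 : 1 ≤ β)
    (hz₀ : z₀ = (u ^ (1 / β) * ℓ - ℓ ^ (1 / β) * u) / (u ^ (1 / β) - ℓ ^ (1 / β)))
    (hγ : γ = ((u - ℓ) / (u ^ (1 / β) - ℓ ^ (1 / β))) ^ β) :
    convexHull ℝ
      {xz : (Fin n → ℝ) × ℝ |
        ((∀ k, 0 ≤ xz.1 k) ∧
          ℓ ≤ ∏ k, xz.1 k ^ a k ∧ (∏ k, xz.1 k ^ a k) ≤ u ∧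
          p * xz.1 i ≤ xz.1 j ∧ xz.1 j ≤ q * xz.1 i) ∧
        xz.2 ≤ ∏ k, xz.1 k ^ a k} =
    {xz : (Fin n → ℝ) × ℝ |
        (∀ k, 0 ≤ xz.1 k) ∧
        xz.2 - z₀ ≤ (γ * ∏ k, xz.1 k ^ a k) ^ (1 / β) ∧
        xz.2 ≤ u ∧
        p * xz.1 i ≤ xz.1 j ∧ xz.1 j ≤ q * xz.1 i ∧
        ℓ ≤ ∏ k, xz.1 k ^ a k} := by
  have hβpos : 0 < β := lt_of_lt_of_le one_pos hβ1
  have hβne : β ≠ 0 := ne_of_gt hβpos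
  have hb : 0 < 1/β := by positivity
  have hanneg : ∀ k, 0 ≤ a k := fun k => (ha k).le
  have hu : 0 < u := hℓ.trans hℓu
  have hrlt : ℓ ^ (1/β) < u ^ (1/β) := Real.rpow_lt_rpow hℓ.le hℓu hb
  have hLpos : 0 < ℓ ^ (1/β) := Real.rpow_pos_of_pos hℓ _
  set d := u ^ (1/β) - ℓ ^ (1/β) with hd
  have hdpos : 0 < d := sub_pos.mpr hrlt
  set c := (u - ℓ) / d with hc
  have hcpos : 0 < c := div_pos (sub_pos.mpr hℓu) hdpos
  have hγ' : γ = c ^ β := hγ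
  have hγpos : 0 < γ := by rw [hγ']; exact Real.rpow_pos_of_pos hcpos β
  have hγc : γ ^ (1/β) = c := by
    rw [hγ', ← Real.rpow_mul hcpos.le, mul_one_div, div_self hβne, Real.rpow_one]
  have hz₀' : z₀ = ℓ - c * ℓ ^ (1/β) := by
    rw [hz₀, hc]
    field_simp
    ring
  have hul : (0:ℝ) < u - ℓ := by linarith
  -- chord inequality
  have chord : ∀ t : ℝ, ℓ ≤ t → t ≤ u → t ≤ z₀ + c * t ^ (1/β) := by
    intro t h1 h2
    have hconc := Real.concaveOn_rpow hb.le (by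
      rw [div_le_one hβpos]; linarith)
    have hw1 : 0 ≤ (u - t)/(u - ℓ) := div_nonneg (by linarith) hul.le
    have hw2 : 0 ≤ (t - ℓ)/(u - ℓ) := div_nonneg (by linarith) hul.le
    have hw12 : (u - t)/(u - ℓ) + (t - ℓ)/(u - ℓ) = 1 := by
      field_simp
      ring
    have h3 := hconc.2 (Set.mem_Ici.mpr hℓ.le) (Set.mem_Ici.mpr hu.le) hw1 hw2 hw12
    simp only [smul_eq_mul] at h3
    have harg : (u - t)/(u - ℓ) * ℓ + (t - ℓ)/(u - ℓ) * u = t := by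
      field_simp; ring
    rw [harg] at h3
    have h3' : (u - t) * ℓ ^ (1/β) + (t - ℓ) * u ^ (1/β) ≤ (u - ℓ) * t ^ (1/β) := by
      have h := mul_le_mul_of_nonneg_left h3 hul.le
      rw [mul_add, ← mul_assoc, ← mul_assoc, mul_div_cancel₀ _ hul.ne',
        mul_div_cancel₀ _ hul.ne'] at h
      linarith
    rw [hz₀']
    have hgoal : (t - ℓ) * d ≤ (u - ℓ) * (t ^ (1/β) - ℓ ^ (1/β)) := by
      rw [hd]; nlinarith [h3']
    have : t - ℓ ≤ c * (t ^ (1/β) - ℓ ^ (1/β)) := by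
      rw [hc, div_mul_eq_mul_div, le_div_iff₀ hdpos]
      linarith [hgoal]
    linarith [this]
  apply Set.Subset.antisymm
  · -- convex hull ⊆ H
    apply convexHull_min
    · rintro ⟨x, z⟩ ⟨⟨hx0, hlf, hfu, hw1, hw2⟩, hzf⟩
      have hf0 : 0 ≤ ∏ k, x k ^ a k :=
        Finset.prod_nonneg fun k _ => Real.rpow_nonneg (hx0 k) _
      refine ⟨hx0, ?_, le_trans hzf hfu, hw1, hw2, hlf⟩
      have hmr : (γ * ∏ k, x k ^ a k) ^ (1/β) = c * (∏ k, x k ^ a k) ^ (1/β) := by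
        rw [Real.mul_rpow hγpos.le hf0, hγc]
      rw [hmr]
      have := chord _ hlf hfu
      simp only at hzf ⊢
      linarith
    · rintro ⟨x, zx⟩ hx ⟨y, zy⟩ hy μ ν hμ hν hμν
      obtain ⟨hx0, hex, hxu, hxw1, hxw2, hxl⟩ := hx
      obtain ⟨hy0, hey, hyu, hyw1, hyw2, hyl⟩ := hy
      simp only [Set.mem_setOf_eq, Prod.fst_add, Prod.snd_add, Prod.smul_fst,
        Prod.smul_snd, Pi.add_apply, Pi.smul_apply, smul_eq_mul] at hex hey hxu hyu hxw1 hyw1 hxw2 hyw2 hxl hyl hx0 hy0 ⊢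
      have hfx0 : 0 ≤ ∏ k, x k ^ a k :=
        Finset.prod_nonneg fun k _ => Real.rpow_nonneg (hx0 k) _
      have hfy0 : 0 ≤ ∏ k, y k ^ a k :=
        Finset.prod_nonneg fun k _ => Real.rpow_nonneg (hy0 k) _
      have hcomb0 : ∀ k, (0:ℝ) ≤ μ * x k + ν * y k :=
        fun k => add_nonneg (mul_nonneg hμ (hx0 k)) (mul_nonneg hν (hy0 k))
      have hfc0 : 0 ≤ ∏ k, (μ * x k + ν * y k) ^ a k :=
        Finset.prod_nonneg fun k _ => Real.rpow_nonneg (hcomb0 k) _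
      have huu : μ * u + ν * u = u := by rw [← add_mul, hμν, one_mul]
      have hzz : μ * z₀ + ν * z₀ = z₀ := by rw [← add_mul, hμν, one_mul]
      refine ⟨hcomb0, ?_, ?_, ?_, ?_, ?_⟩
      · -- envelope
        have hgc := geom_concave hanneg hβ hβpos hx0 hy0 hμ hν hμν
        have e1 : (γ * ∏ k, (μ * x k + ν * y k) ^ a k) ^ (1/β)
            = c * (∏ k, (μ * x k + ν * y k) ^ a k) ^ (1/β) := by
          rw [Real.mul_rpow hγpos.le hfc0, hγc]
        rw [Real.mul_rpow hγpos.le hfx0, hγc] at hex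
        rw [Real.mul_rpow hγpos.le hfy0, hγc] at hey
        rw [e1]
        have h1 : μ * (zx - z₀) ≤ μ * (c * (∏ k, x k ^ a k) ^ (1/β)) :=
          mul_le_mul_of_nonneg_left hex hμ
        have h2 : ν * (zy - z₀) ≤ ν * (c * (∏ k, y k ^ a k) ^ (1/β)) :=
          mul_le_mul_of_nonneg_left hey hν
        have h3 : c * (μ * (∏ k, x k ^ a k) ^ (1/β) + ν * (∏ k, y k ^ a k) ^ (1/β))
            ≤ c * (∏ k, (μ * x k + ν * y k) ^ a k) ^ (1/β) :=
          mul_le_mul_of_nonneg_left hgc hcpos.le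
        linarith [h1, h2, h3, hzz]
      · linarith [mul_le_mul_of_nonneg_left hxu hμ, mul_le_mul_of_nonneg_left hyu hν, huu]
      · linarith [mul_le_mul_of_nonneg_left hxw1 hμ, mul_le_mul_of_nonneg_left hyw1 hν]
      · linarith [mul_le_mul_of_nonneg_left hxw2 hμ, mul_le_mul_of_nonneg_left hyw2 hν]
      · -- lower level set
        have hgc := geom_comb hanneg hx0 hy0 hμ hν hμν
        have h1 : ℓ ^ μ ≤ (∏ k, x k ^ a k) ^ μ := Real.rpow_le_rpow hℓ.le hxl hμ
        have h2 : ℓ ^ ν ≤ (∏ k, y k ^ a k) ^ ν := Real.rpow_le_rpow hℓ.le hyl hν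
        have h3 : ℓ ^ μ * ℓ ^ ν ≤ (∏ k, x k ^ a k) ^ μ * (∏ k, y k ^ a k) ^ ν :=
          mul_le_mul h1 h2 (Real.rpow_nonneg hℓ.le _) (Real.rpow_nonneg hfx0 _)
        have h4 : ℓ ^ μ * ℓ ^ ν = ℓ := by
          rw [← Real.rpow_add hℓ, hμν, Real.rpow_one]
        linarith [hgc]
  · -- H ⊆ convex hull
    rintro ⟨x, z⟩ ⟨hx0, henv, hzu, hw1, hw2, hlf⟩
    simp only [Set.mem_setOf_eq] at hx0 henv hzu hw1 hw2 hlf ⊢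
    have hfx0 : (0:ℝ) < ∏ k, x k ^ a k := lt_of_lt_of_le hℓ hlf
    set fx := ∏ k, x k ^ a k with hfxdef
    set X := fx ^ (1/β) with hXdef
    have hX : 0 < X := Real.rpow_pos_of_pos hfx0 _
    have henv' : z - z₀ ≤ c * X := by
      rwa [Real.mul_rpow hγpos.le hfx0.le, hγc] at henv
    by_cases hfu : fx ≤ u
    · -- Case A : scale along the ray
      set s1 := (ℓ / fx) ^ (1/β) with hs1def
      set s2 := (u / fx) ^ (1/β) with hs2def
      have hs1p : 0 < s1 := Real.rpow_pos_of_pos (div_pos hℓ hfx0) _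
      have hs2p : 0 < s2 := Real.rpow_pos_of_pos (div_pos hu hfx0) _
      have hs12 : s1 < s2 :=
        Real.rpow_lt_rpow (div_nonneg hℓ.le hfx0.le)
          ((div_lt_div_iff_of_pos_right hfx0).mpr hℓu) hb
      have hs11 : s1 ≤ 1 :=
        Real.rpow_le_one (div_nonneg hℓ.le hfx0.le) ((div_le_one hfx0).mpr hlf) hb.le
      have hs21 : 1 ≤ s2 := by
        calc (1:ℝ) = 1 ^ (1/β) := (Real.one_rpow _).symm
          _ ≤ s2 := Real.rpow_le_rpow zero_le_one ((one_le_div hfx0).mpr hfu) hb.le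
      have hs1β : s1 ^ β = ℓ / fx := by
        rw [hs1def, ← Real.rpow_mul (div_nonneg hℓ.le hfx0.le), one_div,
          inv_mul_cancel₀ hβne, Real.rpow_one]
      have hs2β : s2 ^ β = u / fx := by
        rw [hs2def, ← Real.rpow_mul (div_nonneg hu.le hfx0.le), one_div,
          inv_mul_cancel₀ hβne, Real.rpow_one]
      have hfs1 : ∏ k, (s1 * x k) ^ a k = ℓ := by
        rw [prod_scaled hanneg hx0 hs1p.le, ← hβ, hs1β, div_mul_cancel₀ _ (ne_of_gt hfx0)]
      have hfs2 : ∏ k, (s2 * x k) ^ a k = u := by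
        rw [prod_scaled hanneg hx0 hs2p.le, ← hβ, hs2β, div_mul_cancel₀ _ (ne_of_gt hfx0)]
      have hs1X : s1 = ℓ ^ (1/β) / X := by
        rw [hs1def, Real.div_rpow hℓ.le hfx0.le, hXdef]
      have hs2X : s2 = u ^ (1/β) / X := by
        rw [hs2def, Real.div_rpow hu.le hfx0.le, hXdef]
      set θ := (1 - s1) / (s2 - s1) with hθdef
      have hθ0 : 0 ≤ θ := div_nonneg (by linarith) (by linarith)
      have hθ1 : θ ≤ 1 := by
        rw [hθdef, div_le_one (by linarith)]; linarith
      have hθq : θ * (s2 - s1) = 1 - s1 := by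
        rw [hθdef, div_mul_cancel₀ _ (ne_of_gt (by linarith : (0:ℝ) < s2 - s1))]
      have hθval : θ = (X - ℓ ^ (1/β)) / d := by
        have e1 : 1 - s1 = (X - ℓ ^ (1/β)) / X := by
          rw [hs1X, sub_div']
          · ring_nf
          · exact ne_of_gt hX
        have e2 : s2 - s1 = d / X := by
          rw [hs1X, hs2X, div_sub_div_same, ← hd]
        rw [hθdef, e1, e2, div_div_div_cancel_right₀ (ne_of_gt hX)]
      set δ := z₀ + c * X - z with hδdef
      have hδ0 : 0 ≤ δ := by rw [hδdef]; linarith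
      have hzid : ℓ + θ * (u - ℓ) = z₀ + c * X := by
        rw [hθval, hz₀', hc]
        field_simp
        ring
      have hcoef : (1 - θ) * s1 + θ * s2 = 1 := by linear_combination hθq
      refine segment_subset_convexHull (x := ((fun k => s1 * x k, ℓ - δ) :
          (Fin n → ℝ) × ℝ)) (y := ((fun k => s2 * x k, u - δ) : (Fin n → ℝ) × ℝ))
          ?_ ?_ ?_
      · refine ⟨⟨fun k => mul_nonneg hs1p.le (hx0 k), ?_, ?_, ?_, ?_⟩, ?_⟩
        · show ℓ ≤ ∏ k, (s1 * x k) ^ a k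
          rw [hfs1]
        · show (∏ k, (s1 * x k) ^ a k) ≤ u
          rw [hfs1]; exact hℓu.le
        · show p * (s1 * x i) ≤ s1 * x j
          calc p * (s1 * x i) = s1 * (p * x i) := by ring
            _ ≤ s1 * x j := mul_le_mul_of_nonneg_left hw1 hs1p.le
        · show s1 * x j ≤ q * (s1 * x i)
          calc s1 * x j ≤ s1 * (q * x i) := mul_le_mul_of_nonneg_left hw2 hs1p.le
            _ = q * (s1 * x i) := by ring
        · show ℓ - δ ≤ ∏ k, (s1 * x k) ^ a k
          rw [hfs1]; linarith
      · refine ⟨⟨fun k => mul_nonneg hs2p.le (hx0 k), ?_, ?_, ?_, ?_⟩, ?_⟩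
        · show ℓ ≤ ∏ k, (s2 * x k) ^ a k
          rw [hfs2]; exact hℓu.le
        · show (∏ k, (s2 * x k) ^ a k) ≤ u
          rw [hfs2]
        · show p * (s2 * x i) ≤ s2 * x j
          calc p * (s2 * x i) = s2 * (p * x i) := by ring
            _ ≤ s2 * x j := mul_le_mul_of_nonneg_left hw1 hs2p.le
        · show s2 * x j ≤ q * (s2 * x i)
          calc s2 * x j ≤ s2 * (q * x i) := mul_le_mul_of_nonneg_left hw2 hs2p.le
            _ = q * (s2 * x i) := by ring
        · show u - δ ≤ ∏ k, (s2 * x k) ^ a k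
          rw [hfs2]; linarith
      · refine ⟨1 - θ, θ, by linarith, hθ0, by ring, ?_⟩
        refine Prod.ext ?_ ?_
        · funext m
          show (1 - θ) * (s1 * x m) + θ * (s2 * x m) = x m
          linear_combination x m * hcoef
        · show (1 - θ) * (ℓ - δ) + θ * (u - δ) = z
          rw [hδdef]
          linear_combination hzid
    · -- Case B : f x > u
      push_neg at hfu
      obtain ⟨k, hki, hkj⟩ : ∃ k : Fin n, k ≠ i ∧ k ≠ j := by
        by_contra hcon
        push_neg at hcon
        have hsub : (Finset.univ : Finset (Fin n)) ⊆ {i, j} := by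
          intro m _
          rcases eq_or_ne m i with rfl | hmi
          · exact Finset.mem_insert_self _ _
          · have := hcon m hmi
            simp [this]
        have h1 := Finset.card_le_card hsub
        have h2 : ({i, j} : Finset (Fin n)).card ≤ 2 :=
          le_trans (Finset.card_insert_le _ _) (by simp)
        simp [Finset.card_univ] at h1
        omega
      have hxpos : ∀ m, 0 < x m := by
        intro m
        rcases (hx0 m).lt_or_eq with h | h
        · exact h
        · exfalso
          have hz' : fx = 0 := Finset.prod_eq_zero (Finset.mem_univ m) (by
            rw [← h, Real.zero_rpow (ne_of_gt (ha m))])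
          rw [hz'] at hfx0
          exact lt_irrefl 0 hfx0
      set scl : ℝ → Fin n → ℝ := fun t m =>
        if m = k then 1 + t else if m = i ∨ m = j then 1 - t else 1 with hscl
      set Y : ℝ → Fin n → ℝ := fun t m => scl t m * x m with hY
      set g : ℝ → ℝ := fun t => ∏ m, (Y t m) ^ a m with hg
      have hgcont : Continuous g := by
        rw [hg]
        apply continuous_finset_prod
        intro m _
        apply Continuous.rpow_const
        · apply Continuous.mul _ continuous_const
          simp only [hscl]
          by_cases h1 : m = k
          · simpa [h1] using (by fun_prop : Continuous fun t : ℝ => 1 + t)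
          by_cases h2 : m = i ∨ m = j
          · simpa [h1, h2] using (by fun_prop : Continuous fun t : ℝ => 1 - t)
          · simpa [h1, h2] using (continuous_const : Continuous fun _ : ℝ => (1:ℝ))
        · intro t; exact Or.inr (hanneg m)
      have hg0 : g 0 = fx := by
        rw [hg, hfxdef]
        refine Finset.prod_congr rfl fun m _ => ?_
        have hY0 : Y 0 m = x m := by
          simp only [hY, hscl]
          split_ifs <;> norm_num
        rw [hY0]
      have hg1 : g 1 = 0 := by
        rw [hg]
        refine Finset.prod_eq_zero (Finset.mem_univ i) ?_
        have hY1 : Y 1 i = 0 := by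
          simp only [hY, hscl, if_neg (Ne.symm hki)]
          norm_num
        rw [hY1, Real.zero_rpow (ne_of_gt (ha i))]
      have hgm1 : g (-1) = 0 := by
        rw [hg]
        refine Finset.prod_eq_zero (Finset.mem_univ k) ?_
        have hY1 : Y (-1) k = 0 := by
          simp only [hY, hscl, if_pos rfl]
          norm_num
        rw [hY1, Real.zero_rpow (ne_of_gt (ha k))]
      have humem1 : u ∈ Set.Icc (g (-1)) (g 0) := by
        rw [hgm1, hg0]; exact ⟨hu.le, hfu.le⟩
      obtain ⟨t1, ht1mem, hgt1⟩ :=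
        intermediate_value_Icc (by norm_num : (-1:ℝ) ≤ 0) hgcont.continuousOn humem1
      have humem2 : u ∈ Set.Icc (g 1) (g 0) := by
        rw [hg1, hg0]; exact ⟨hu.le, hfu.le⟩
      obtain ⟨t2, ht2mem, hgt2⟩ :=
        intermediate_value_Icc' (by norm_num : (0:ℝ) ≤ 1) hgcont.continuousOn humem2
      have ht1ne : t1 ≠ 0 := by
        rintro rfl
        rw [hg0] at hgt1
        linarith
      have ht2ne : t2 ≠ 0 := by
        rintro rfl
        rw [hg0] at hgt2
        linarith
      have ht1neg : t1 < 0 := lt_of_le_of_ne ht1mem.2 ht1ne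
      have ht2pos : 0 < t2 := lt_of_le_of_ne ht2mem.1 (Ne.symm ht2ne)
      have hden : 0 < t2 - t1 := by linarith
      have hscl1nn : ∀ m, 0 ≤ scl t1 m := by
        intro m
        simp only [hscl]
        split_ifs
        · linarith [ht1mem.1]
        · linarith [ht1mem.2]
        · norm_num
      have hscl2nn : ∀ m, 0 ≤ scl t2 m := by
        intro m
        simp only [hscl]
        split_ifs
        · linarith [ht2mem.1]
        · linarith [ht2mem.2]
        · norm_num
      have hYi : ∀ t, Y t i = (1 - t) * x i := by
        intro t
        simp only [hY, hscl, if_neg (Ne.symm hki)]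
        simp
      have hYj : ∀ t, Y t j = (1 - t) * x j := by
        intro t
        simp only [hY, hscl, if_neg (Ne.symm hkj)]
        simp
      have hmem : ∀ t : ℝ, 0 ≤ 1 - t → (∀ m, 0 ≤ scl t m) → g t = u →
          ((Y t, z) : (Fin n → ℝ) × ℝ) ∈
          {xz : (Fin n → ℝ) × ℝ |
            ((∀ m, 0 ≤ xz.1 m) ∧
              ℓ ≤ ∏ m, xz.1 m ^ a m ∧ (∏ m, xz.1 m ^ a m) ≤ u ∧
              p * xz.1 i ≤ xz.1 j ∧ xz.1 j ≤ q * xz.1 i) ∧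
            xz.2 ≤ ∏ m, xz.1 m ^ a m} := by
        intro t ht hnn hgu
        have hfY : (∏ m, Y t m ^ a m) = u := hgu
        refine ⟨⟨fun m => mul_nonneg (hnn m) (hxpos m).le, ?_, ?_, ?_, ?_⟩, ?_⟩
        · show ℓ ≤ ∏ m, Y t m ^ a m
          rw [hfY]; exact hℓu.le
        · show (∏ m, Y t m ^ a m) ≤ u
          rw [hfY]
        · show p * Y t i ≤ Y t j
          rw [hYi, hYj]
          calc p * ((1 - t) * x i) = (1 - t) * (p * x i) := by ring
            _ ≤ (1 - t) * x j := mul_le_mul_of_nonneg_left hw1 ht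
        · show Y t j ≤ q * Y t i
          rw [hYi, hYj]
          calc (1 - t) * x j ≤ (1 - t) * (q * x i) := mul_le_mul_of_nonneg_left hw2 ht
            _ = q * ((1 - t) * x i) := by ring
        · show z ≤ ∏ m, Y t m ^ a m
          rw [hfY]; exact hzu
      refine segment_subset_convexHull
        (hmem t1 (by linarith [ht1mem.2]) hscl1nn hgt1)
        (hmem t2 (by linarith [ht2mem.2]) hscl2nn hgt2) ?_
      refine ⟨t2 / (t2 - t1), -t1 / (t2 - t1), div_nonneg ht2pos.le hden.le,
        div_nonneg (by linarith) hden.le, ?_, ?_⟩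
      · field_simp
        ring
      · refine Prod.ext ?_ ?_
        · funext m
          show t2 / (t2 - t1) * Y t1 m + -t1 / (t2 - t1) * Y t2 m = x m
          simp only [hY, hscl]
          by_cases h1 : m = k
          · rw [if_pos h1, if_pos h1]
            field_simp
            ring
          by_cases h2 : m = i ∨ m = j
          · rw [if_neg h1, if_neg h1, if_pos h2, if_pos h2]
            field_simp
            ring
          · rw [if_neg h1, if_neg h1, if_neg h2, if_neg h2]
            field_simp
            ring
        · show t2 / (t2 - t1) * z + -t1 / (t2 - t1) * z = z
          field_simp
          ring
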